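/- Let A be a set of bounded operators on a Hilbert space H such that each T ∈ A leaves a closed subspace N invariant. If every T ∈ A is essentially normal and the restriction T|_N of every T ∈ A to N is essentially normal, then for every T ∈ A the compression of T to N⊥ (the induced operator on the quotient H/N) is essentially normal. -/

import Mathlib

open ContinuousLinearMap Metric Set

section Aux

lemma isCompactOperator_of_adjoint_comp' {H : Type*} [NormedAddCommGroup H]
    [InnerProductSpace ℂ H] [CompleteSpace H] (S : H →L[ℂ] H)
    (h : IsCompactOperator ⇑(adjoint S ∘L S)) :
    IsCompactOperator ⇑S := by
  set A := adjoint S ∘L S with hA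
  have key : ∀ x : H, ‖S x‖ ^ 2 ≤ ‖A x‖ * ‖x‖ := by
    intro x
    have h1 : (‖S x‖ : ℝ) ^ 2 = RCLike.re (inner (𝕜 := ℂ) (A x) x) := by
      rw [hA]
      simp only [ContinuousLinearMap.comp_apply, ContinuousLinearMap.adjoint_inner_left]
      rw [inner_self_eq_norm_sq]
    rw [h1]
    calc RCLike.re (inner (𝕜 := ℂ) (A x) x) ≤ ‖inner (𝕜 := ℂ) (A x) x‖ := RCLike.re_le_norm _
      _ ≤ ‖A x‖ * ‖x‖ := norm_inner_le_norm _ _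
  have hTB : TotallyBounded (⇑S '' closedBall (0:H) 1) := by
    rw [Metric.totallyBounded_iff]
    intro ε hε
    have hδ : 0 < ε ^ 2 / 4 := by positivity
    have hA2 : IsCompactOperator ⇑(A : H →ₗ[ℂ] H) := h
    obtain ⟨K, hKc, hKsub⟩ := hA2.image_closedBall_subset_compact (𝕜₁ := ℂ) 1
    have hTBA : TotallyBounded (⇑A '' closedBall (0:H) 1) := hKc.totallyBounded.subset hKsub
    obtain ⟨t, hts, htfin, htcover⟩ := finite_approx_of_totallyBounded hTBA _ hδ
    choose! f hfB hfA using fun y (hy : y ∈ t) => hts hy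
    refine ⟨(fun y => S (f y)) '' t, htfin.image _, ?_⟩
    rintro _ ⟨x, hx, rfl⟩
    obtain ⟨y, hyt, hyd⟩ := Set.mem_iUnion₂.1 (htcover ⟨x, hx, rfl⟩)
    refine Set.mem_iUnion₂.2 ⟨S (f y), Set.mem_image_of_mem _ hyt, ?_⟩
    rw [mem_ball, dist_eq_norm]
    have hxfy : ‖x - f y‖ ≤ 2 := by
      have h1 : ‖x‖ ≤ 1 := by simpa [dist_eq_norm] using hx
      have h2 : ‖f y‖ ≤ 1 := by simpa [dist_eq_norm] using hfB y hyt
      calc ‖x - f y‖ ≤ ‖x‖ + ‖f y‖ := norm_sub_le _ _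
        _ ≤ 2 := by linarith
    have hAxy : ‖A x - A (f y)‖ ≤ ε ^ 2 / 4 := by
      rw [mem_ball, dist_eq_norm] at hyd
      rw [hfA y hyt]
      exact le_of_lt hyd
    have hsq : ‖S x - S (f y)‖ ^ 2 ≤ ε ^ 2 / 2 := by
      have e1 : S x - S (f y) = S (x - f y) := by rw [map_sub]
      have e2 : A x - A (f y) = A (x - f y) := by rw [map_sub]
      rw [e1]
      calc ‖S (x - f y)‖ ^ 2 ≤ ‖A (x - f y)‖ * ‖x - f y‖ := key _
        _ ≤ (ε ^ 2 / 4) * 2 := by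
            apply mul_le_mul (e2 ▸ hAxy) hxfy (norm_nonneg _) (le_of_lt hδ)
        _ = ε ^ 2 / 2 := by ring
    nlinarith [norm_nonneg (S x - S (f y))]
  refine ⟨closure (⇑S '' closedBall (0:H) 1),
    hTB.closure.isCompact_of_isClosed isClosed_closure, ?_⟩
  apply Filter.mem_of_superset (Metric.closedBall_mem_nhds (0:H) one_pos)
  intro x hx
  exact subset_closure (Set.mem_image_of_mem _ hx)

variable {R : Type*} [Ring R] (p T s : R)

lemma corner_id1
    (hpp : p * p = p) (h0 : (1 - p) * (T * p) = 0) (h0' : p * (s * (1 - p)) = 0) :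
    (p * (T * (1 - p))) * ((1 - p) * (s * p)) =
      ((p * (s * p)) * (p * (T * p)) - (p * (T * p)) * (p * (s * p)))
        - p * ((s * T - T * s) * p) := by
  have htp : p * (T * p) = T * p := by
    have h : (1 - p) * (T * p) = T * p - p * (T * p) := by noncomm_ring
    rw [h, sub_eq_zero] at h0; exact h0.symm
  have hps : p * (s * p) = p * s := by
    have h : p * (s * (1 - p)) = p * s - p * (s * p) := by noncomm_ring
    rw [h, sub_eq_zero] at h0'; exact h0'.symm
  have g1 : ∀ x : R, p * (p * x) = p * x := fun x => by rw [← mul_assoc, hpp]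
  have g2 : ∀ x : R, p * (T * (p * x)) = T * (p * x) := fun x => by
    simp only [← mul_assoc]; rw [mul_assoc p T p, htp]
  have g3 : ∀ x : R, p * (s * (p * x)) = p * (s * x) := fun x => by
    simp only [← mul_assoc]; rw [mul_assoc p s p, hps]
  simp only [mul_sub, sub_mul, mul_one, one_mul, mul_assoc]
  simp only [g1, g2, g3, hpp, htp, hps]
  noncomm_ring

lemma corner_id2
    (hpp : p * p = p) (h0 : (1 - p) * (T * p) = 0) (h0' : p * (s * (1 - p)) = 0) :
    ((1 - p) * (s * (1 - p))) * ((1 - p) * (T * (1 - p)))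
      - ((1 - p) * (T * (1 - p))) * ((1 - p) * (s * (1 - p))) =
      (1 - p) * ((s * T - T * s) * (1 - p)) - ((1 - p) * (s * p)) * (p * (T * (1 - p))) := by
  have htp : p * (T * p) = T * p := by
    have h : (1 - p) * (T * p) = T * p - p * (T * p) := by noncomm_ring
    rw [h, sub_eq_zero] at h0; exact h0.symm
  have hps : p * (s * p) = p * s := by
    have h : p * (s * (1 - p)) = p * s - p * (s * p) := by noncomm_ring
    rw [h, sub_eq_zero] at h0'; exact h0'.symm
  have g1 : ∀ x : R, p * (p * x) = p * x := fun x => by rw [← mul_assoc, hpp]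
  have g2 : ∀ x : R, p * (T * (p * x)) = T * (p * x) := fun x => by
    simp only [← mul_assoc]; rw [mul_assoc p T p, htp]
  have g3 : ∀ x : R, p * (s * (p * x)) = p * (s * x) := fun x => by
    simp only [← mul_assoc]; rw [mul_assoc p s p, hps]
  simp only [mul_sub, sub_mul, mul_one, one_mul, mul_assoc]
  simp only [g1, g2, g3, hpp, htp, hps]
  noncomm_ring

end Aux

theorem quotient_essentially_normal_of_family
    {H : Type*} [NormedAddCommGroup H] [InnerProductSpace ℂ H] [CompleteSpace H]
    (N : Submodule ℂ H) [CompleteSpace N]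
    (P : H →L[ℂ] H) (hP : P = N.subtypeL ∘L N.orthogonalProjection)
    (𝒜 : Set (H →L[ℂ] H))
    (hinv : ∀ T ∈ 𝒜, (1 - P) ∘L T ∘L P = 0)
    (hT : ∀ T ∈ 𝒜, IsCompactOperator ⇑(adjoint T ∘L T - T ∘L adjoint T))
    (hres : ∀ T ∈ 𝒜, IsCompactOperator
      ⇑(adjoint (P ∘L T ∘L P) ∘L (P ∘L T ∘L P) - (P ∘L T ∘L P) ∘L adjoint (P ∘L T ∘L P))) :
    ∀ T ∈ 𝒜, IsCompactOperator
      ⇑((adjoint ((1 - P) ∘L T ∘L (1 - P)) ∘L ((1 - P) ∘L T ∘L (1 - P)) -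
        ((1 - P) ∘L T ∘L (1 - P)) ∘L adjoint ((1 - P) ∘L T ∘L (1 - P)) : H →L[ℂ] H)) := by
  intro T hTmem
  set s : H →L[ℂ] H := adjoint T with hs
  have hsP : star P = P := by
    rw [hP]; exact (isSelfAdjoint_starProjection N).star_eq
  have hpp : P * P = P := by
    ext x
    rw [ContinuousLinearMap.mul_apply, hP]
    simp [Submodule.orthogonalProjectionOnto_mem_subspace_eq_self, Submodule.starProjection_eq_self_iff,
      Submodule.starProjection_apply_mem]
  -- invariance in ring form
  have h0 : (1 - P) * (T * P) = 0 := by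
    rw [ContinuousLinearMap.mul_def, ContinuousLinearMap.mul_def]
    exact hinv T hTmem
  have h0' : P * (s * (1 - P)) = 0 := by
    have h := congrArg star h0
    simp only [star_mul, star_sub, star_one, hsP, star_zero, star_eq_adjoint, ← hs] at h
    calc P * (s * (1 - P)) = star (T * P) * star (1 - P) := by
          simp only [star_mul, star_sub, star_one, hsP, star_eq_adjoint, ← hs]
          noncomm_ring
      _ = 0 := by rw [← star_mul, h0, star_zero]
  -- essential normality of T in ring form
  have hTc : IsCompactOperator ⇑(s * T - T * s) := by
    have e : adjoint T ∘L T - T ∘L adjoint T = s * T - T * s := by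
      rw [← hs]; rw [ContinuousLinearMap.mul_def, ContinuousLinearMap.mul_def]
    rw [← e]; exact hT T hTmem
  -- compression of the commutator is compact (generic)
  have hmid : ∀ Q : H →L[ℂ] H, IsCompactOperator ⇑(Q * ((s * T - T * s) * Q)) := by
    intro Q
    have e : ⇑(Q * ((s * T - T * s) * Q)) = ⇑Q ∘ (⇑(s * T - T * s) ∘ ⇑Q) := by
      rw [ContinuousLinearMap.mul_def, ContinuousLinearMap.mul_def,
        ContinuousLinearMap.coe_comp', ContinuousLinearMap.coe_comp']
    rw [e]
    exact (hTc.comp_clm Q).clm_comp Q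
  -- essential normality of P T P in ring form
  have hresc : IsCompactOperator
      ⇑((P * (s * P)) * (P * (T * P)) - (P * (T * P)) * (P * (s * P))) := by
    have e : adjoint (P ∘L T ∘L P) ∘L (P ∘L T ∘L P) - (P ∘L T ∘L P) ∘L adjoint (P ∘L T ∘L P)
        = (P * (s * P)) * (P * (T * P)) - (P * (T * P)) * (P * (s * P)) := by
      simp only [← ContinuousLinearMap.mul_def, ← star_eq_adjoint, star_mul, hsP, ← hs]
      noncomm_ring
    rw [← e]; exact hres T hTmem
  -- C C* is compact, where C = P T (1-P)
  set Cc : H →L[ℂ] H := P * (T * (1 - P)) with hCc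
  have hstarC : star Cc = (1 - P) * (s * P) := by
    rw [hCc]
    simp only [star_mul, star_sub, star_one, hsP, star_eq_adjoint, ← hs]
    noncomm_ring
  have hCCstar : IsCompactOperator ⇑(Cc * star Cc) := by
    have e : Cc * star Cc =
        ((P * (s * P)) * (P * (T * P)) - (P * (T * P)) * (P * (s * P)))
          - P * ((s * T - T * s) * P) := by
      rw [hstarC, hCc]
      exact corner_id1 P T s hpp h0 h0'
    rw [e, ContinuousLinearMap.coe_sub']
    exact hresc.sub (hmid P)
  -- hence C* is compact, hence C* C is compact
  have hCstar : IsCompactOperator ⇑(star Cc) := by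
    apply isCompactOperator_of_adjoint_comp' (star Cc)
    have e : adjoint (star Cc) ∘L star Cc = Cc * star Cc := by
      rw [← star_eq_adjoint, star_star, ContinuousLinearMap.mul_def]
    rw [e]; exact hCCstar
  have hCstarC : IsCompactOperator ⇑(star Cc * Cc) := by
    rw [ContinuousLinearMap.mul_def, ContinuousLinearMap.coe_comp']
    exact hCstar.comp_clm Cc
  -- final identity
  have keyeq : adjoint ((1 - P) ∘L T ∘L (1 - P)) ∘L ((1 - P) ∘L T ∘L (1 - P)) -
      ((1 - P) ∘L T ∘L (1 - P)) ∘L adjoint ((1 - P) ∘L T ∘L (1 - P))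
      = (1 - P) * ((s * T - T * s) * (1 - P)) - star Cc * Cc := by
    rw [hstarC, hCc]
    simp only [← ContinuousLinearMap.mul_def, ← star_eq_adjoint, star_mul, star_sub, star_one,
      hsP, ← hs]
    calc ((1 - P) * (s * (1 - P))) * ((1 - P) * (T * (1 - P)))
          - ((1 - P) * (T * (1 - P))) * ((1 - P) * (s * (1 - P)))
        = (1 - P) * ((s * T - T * s) * (1 - P)) - ((1 - P) * (s * P)) * (P * (T * (1 - P))) :=
          corner_id2 P T s hpp h0 h0'
      _ = _ := by noncomm_ring
  rw [keyeq, ContinuousLinearMap.coe_sub']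
  exact (hmid (1 - P)).sub hCstarC
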